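/- Let (M,g) be a manifold with unit parallel vector field V and a vector field W = JV satisfying ∇_X W = (b/2)(X − g(X,V)V − g(X,W)W) for a function b, where g(V,W)=0 and |W|=1. Then the distribution D = span{V,W}^⊥ is involutive, [V,W] = 0, and [V,D] ⊆ D, [W,D] ⊆ D. -/

import Mathlib

/-- Lie bracket of vector fields on a chart. -/
noncomputable def lieB {E : Type*} [NormedAddCommGroup E] [NormedSpace ℝ E]
    (X Y : E → E) : E → E := fun x => fderiv ℝ Y x (X x) - fderiv ℝ X x (Y x)

/-- Levi-Civita connection of a metric tensor on a chart. -/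
def IsLeviCivita {E : Type*} [NormedAddCommGroup E] [NormedSpace ℝ E]
    (g : E → E →L[ℝ] E →L[ℝ] ℝ) (nab : (E → E) → (E → E) → E → E) : Prop :=
  (∀ X Y Z : E → E, Differentiable ℝ Y → Differentiable ℝ Z → ∀ x : E,
      fderiv ℝ (fun y => g y (Y y) (Z y)) x (X x)
        = g x (nab X Y x) (Z x) + g x (Y x) (nab X Z x)) ∧
  (∀ X Y : E → E, Differentiable ℝ X → Differentiable ℝ Y → ∀ x : E,
      nab X Y x - nab Y X x = lieB X Y x)

/-- A vector field is a section of the distribution `D = span{V,W}^⊥`. -/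
def IsSectionOfD {E : Type*} [NormedAddCommGroup E] [NormedSpace ℝ E]
    (g : E → E →L[ℝ] E →L[ℝ] ℝ) (V W X : E → E) : Prop :=
  ∀ x : E, g x (X x) (V x) = 0 ∧ g x (X x) (W x) = 0

/-- if `V` is a unit parallel field and `W` (`= JV`) is a unit field
orthogonal to `V` with `∇_X W = (b/2)(X − g(X,V)V − g(X,W)W)`, then the orthogonal
distribution `D = span{V,W}^⊥` is involutive, `[V,W] = 0`, and `[V,D] ⊆ D`,
`[W,D] ⊆ D`. -/
theorem orthogonal_distribution_involutive
    {E : Type*} [NormedAddCommGroup E] [NormedSpace ℝ E]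
    (g : E → E →L[ℝ] E →L[ℝ] ℝ) (hgdiff : Differentiable ℝ g)
    (hsymm : ∀ x u v, g x u v = g x v u)
    (hpos : ∀ x u, u ≠ 0 → 0 < g x u u)
    (nab : (E → E) → (E → E) → E → E) (hLC : IsLeviCivita g nab)
    (V : E → E) (hVdiff : Differentiable ℝ V)
    (hVpar : ∀ X : E → E, ∀ x : E, nab X V x = 0)
    (hVunit : ∀ x, g x (V x) (V x) = 1)
    (W : E → E) (hWdiff : Differentiable ℝ W)
    (hWunit : ∀ x, g x (W x) (W x) = 1)
    (hVW : ∀ x, g x (V x) (W x) = 0)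
    (b : E → ℝ)
    (hW : ∀ X : E → E, Differentiable ℝ X → ∀ x : E,
      nab X W x = (b x / 2) • (X x - g x (X x) (V x) • V x - g x (X x) (W x) • W x)) :
    (∀ x : E, lieB V W x = 0) ∧
    (∀ X Y : E → E, Differentiable ℝ X → Differentiable ℝ Y →
      IsSectionOfD g V W X → IsSectionOfD g V W Y → IsSectionOfD g V W (lieB X Y)) ∧
    (∀ X : E → E, Differentiable ℝ X → IsSectionOfD g V W X →
      IsSectionOfD g V W (lieB V X)) ∧
    (∀ X : E → E, Differentiable ℝ X → IsSectionOfD g V W X →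
      IsSectionOfD g V W (lieB W X)) := by

  obtain ⟨compat, tor⟩ := hLC
  -- derivative of a constant pairing vanishes
  have hconst : ∀ (Y Z : E → E) (c : ℝ), (∀ y, g y (Y y) (Z y) = c) →
      ∀ (x v : E), fderiv ℝ (fun y => g y (Y y) (Z y)) x v = 0 := by
    intro Y Z c h x v
    have he : (fun y => g y (Y y) (Z y)) = fun _ => c := funext h
    rw [he, fderiv_fun_const]
    simp
  -- expand g applied to a Lie bracket
  have hlie : ∀ X Y : E → E, Differentiable ℝ X → Differentiable ℝ Y → ∀ (x u : E),
      g x (lieB X Y x) u = g x (nab X Y x) u - g x (nab Y X x) u := by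
    intro X Y hX hY x u
    rw [← tor X Y hX hY x, map_sub, ContinuousLinearMap.sub_apply]
  -- g(∇_X Y, V) = 0 when g(Y,V) ≡ 0
  have hnabV : ∀ X Y : E → E, Differentiable ℝ Y → (∀ x, g x (Y x) (V x) = 0) →
      ∀ x, g x (nab X Y x) (V x) = 0 := by
    intro X Y hY hYV x
    have h := compat X Y V hY hVdiff x
    rw [hconst Y V 0 hYV x (X x), hVpar X x] at h
    simp at h
    linarith
  -- g(∇_X Y, W) = -(b/2) g(Y,X) when Y is a section of D
  have hnabW : ∀ X Y : E → E, Differentiable ℝ X → Differentiable ℝ Y →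
      (∀ x, g x (Y x) (V x) = 0) → (∀ x, g x (Y x) (W x) = 0) →
      ∀ x, g x (nab X Y x) (W x) = -(b x / 2) * g x (Y x) (X x) := by
    intro X Y hX hY hYV hYW x
    have h := compat X Y W hY hWdiff x
    rw [hconst Y W 0 hYW x (X x), hW X hX x] at h
    simp [map_sub, map_smul, hYV x, hYW x] at h
    linarith
  -- g(∇_X W, V) = 0
  have hXWV : ∀ X : E → E, Differentiable ℝ X → ∀ x, g x (nab X W x) (V x) = 0 := by
    intro X hX x
    rw [hW X hX x]
    simp [map_sub, map_smul, ContinuousLinearMap.sub_apply, ContinuousLinearMap.smul_apply,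
      hVunit x, hsymm x (W x) (V x), hVW x]
  -- g(∇_X W, W) = 0
  have hXWW : ∀ X : E → E, Differentiable ℝ X → ∀ x, g x (nab X W x) (W x) = 0 := by
    intro X hX x
    rw [hW X hX x]
    simp [map_sub, map_smul, ContinuousLinearMap.sub_apply, ContinuousLinearMap.smul_apply,
      hWunit x, hVW x]
  -- ∇_V W = 0
  have hVWnab : ∀ x, nab V W x = 0 := by
    intro x
    rw [hW V hVdiff x]
    simp [hVunit x, hVW x]
  refine ⟨?_, ?_, ?_, ?_⟩
  · intro x
    rw [← tor V W hVdiff hWdiff x, hVWnab x, hVpar W x, sub_zero]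
  · intro X Y hX hY hXD hYD x
    constructor
    · rw [hlie X Y hX hY x (V x), hnabV X Y hY (fun y => (hYD y).1) x,
        hnabV Y X hX (fun y => (hXD y).1) x, sub_zero]
    · rw [hlie X Y hX hY x (W x),
        hnabW X Y hX hY (fun y => (hYD y).1) (fun y => (hYD y).2) x,
        hnabW Y X hY hX (fun y => (hXD y).1) (fun y => (hXD y).2) x,
        hsymm x (Y x) (X x)]
      ring
  · intro X hX hXD x
    constructor
    · rw [hlie V X hVdiff hX x (V x), hnabV V X hX (fun y => (hXD y).1) x,
        hVpar X x]
      simp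
    · rw [hlie V X hVdiff hX x (W x),
        hnabW V X hVdiff hX (fun y => (hXD y).1) (fun y => (hXD y).2) x,
        hVpar X x, (hXD x).1]
      simp
  · intro X hX hXD x
    constructor
    · rw [hlie W X hWdiff hX x (V x), hnabV W X hX (fun y => (hXD y).1) x,
        hXWV X hX x, sub_zero]
    · rw [hlie W X hWdiff hX x (W x),
        hnabW W X hWdiff hX (fun y => (hXD y).1) (fun y => (hXD y).2) x,
        hXWW X hX x, (hXD x).2]
      ring
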